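/- With â₊ = multiplication by α and â₋ = d/dα, the deformed operators B₊ = α², M = 1, N = ((e^{2λα²}−1)/(2λα)) d/dα satisfy [N, B₊] = (e^{2λB₊}−1)/λ, and together with B₋ = ((e^{2λα²}−1)/(2λα²)) d²/dα² + (e^{2λα²}/α + (1−e^{2λα²})/(2λα³)) d/dα they satisfy [B₋, B₊] = 4N + 2M e^{2λB₊} and [N, B₋] = −2B₋ − 4λN². -/

import Mathlib

open PowerSeries

noncomputable section

/-- Formal differentiation `d/dα` as a linear operator on `ℂ⟦α⟧`. -/
def Dop : Module.End ℂ (PowerSeries ℂ) := (PowerSeries.derivative ℂ).toLinearMap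

/-- Multiplication by a fixed formal power series, as a linear operator. -/
def mulOp (s : PowerSeries ℂ) : Module.End ℂ (PowerSeries ℂ) := LinearMap.mulLeft ℂ s

/-- The formal power series `e^{cα²} = ∑ₖ cᵏ α^{2k}/k!`. -/
def expSq (c : ℂ) : PowerSeries ℂ :=
  PowerSeries.mk fun n => if 2 ∣ n then c ^ (n / 2) / (Nat.factorial (n / 2)) else 0

/-- Formal division by `α` (valid when applied to series with zero constant
term). -/
def divX (f : PowerSeries ℂ) : PowerSeries ℂ :=
  PowerSeries.mk fun n => PowerSeries.coeff (n + 1) f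

lemma mulOp_apply (s f : PowerSeries ℂ) : mulOp s f = s * f := rfl
lemma Dop_apply (f : PowerSeries ℂ) : Dop f = PowerSeries.derivative ℂ f := rfl

lemma coeff_divX (n : ℕ) (f : PowerSeries ℂ) :
    PowerSeries.coeff n (divX f) = PowerSeries.coeff (n+1) f := coeff_mk _ _

lemma X_mul_divX {f : PowerSeries ℂ} (h : constantCoeff f = 0) : X * divX f = f := by
  ext n
  cases n with
  | zero => simp [coeff_zero_eq_constantCoeff, h]
  | succ n => rw [coeff_succ_X_mul, coeff_divX]

lemma divX_neg (f : PowerSeries ℂ) : divX (-f) = - divX f := by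
  ext n; simp [coeff_divX]

lemma constantCoeff_expSq (c : ℂ) : constantCoeff (expSq c) = 1 := by
  rw [← coeff_zero_eq_constantCoeff_apply]; simp [expSq]

lemma coeff_one_expSq (c : ℂ) : PowerSeries.coeff 1 (expSq c) = 0 := by
  simp [expSq]

lemma coeff_two_expSq (c : ℂ) : PowerSeries.coeff 2 (expSq c) = c := by
  simp [expSq]

lemma derivative_expSq (c : ℂ) :
    PowerSeries.derivative ℂ (expSq c) = PowerSeries.C (2*c) * (X * expSq c) := by
  ext n
  rw [PowerSeries.coeff_derivative, coeff_C_mul]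
  cases n with
  | zero =>
    simp [coeff_one_expSq, coeff_zero_eq_constantCoeff]
  | succ n =>
    rw [coeff_succ_X_mul]
    simp only [expSq, coeff_mk]
    rcases Nat.even_or_odd n with he | ho
    · obtain ⟨k, rfl⟩ := he
      have h1 : 2 ∣ k + k + 1 + 1 := by omega
      have h2 : 2 ∣ k + k := by omega
      have h3 : (k + k + 1 + 1) / 2 = k + 1 := by omega
      have h4 : (k + k) / 2 = k := by omega
      rw [if_pos h1, if_pos h2, h3, h4, Nat.factorial_succ]
      have hk : ((k.factorial : ℂ)) ≠ 0 := by exact_mod_cast k.factorial_ne_zero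
      have hk1 : ((k:ℂ) + 1) ≠ 0 := Nat.cast_add_one_ne_zero k
      push_cast
      field_simp
      ring
    · obtain ⟨m, rfl⟩ := ho
      have h1 : ¬ 2 ∣ 2*m + 1 + 1 + 1 := by omega
      have h2 : ¬ 2 ∣ 2*m + 1 := by omega
      rw [if_neg h1, if_neg h2]
      ring

/-- The type III deformed operators `B₊ = α²·`, `M = 1`,
`N = ((e^{2λα²}−1)/(2λα)) d/dα` and
`B₋ = ((e^{2λα²}−1)/(2λα²)) d²/dα² + (e^{2λα²}/α + (1−e^{2λα²})/(2λα³)) d/dα`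
of the quantum `gl(2)` subalgebra of `U_λ(h₆)` satisfy
`[N,B₊] = (e^{2λB₊}−1)/λ`, `[B₋,B₊] = 4N + 2M e^{2λB₊}` and
`[N,B₋] = −2B₋ − 4λN²`. -/
theorem deformed_gl2_sector (lam : ℂ) (hlam : lam ≠ 0) :
    let e2 : PowerSeries ℂ := expSq (2 * lam)  -- e^{2λα²}
    let Bp := mulOp (PowerSeries.X ^ 2)
    let M : Module.End ℂ (PowerSeries ℂ) := 1
    let N := mulOp ((2 * lam)⁻¹ • divX (e2 - 1)) * Dop
    let Bm := mulOp ((2 * lam)⁻¹ • divX (divX (e2 - 1))) * (Dop * Dop) +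
      mulOp (divX (e2 + (2 * lam)⁻¹ • divX (divX (1 - e2)))) * Dop
    ⁅N, Bp⁆ = lam⁻¹ • (mulOp e2 - 1) ∧
    ⁅Bm, Bp⁆ = 4 • N + 2 • (M * mulOp e2) ∧
    ⁅N, Bm⁆ = -(2 • Bm) - (4 * lam) • (N * N) := by
  have h2lam : (2 * lam) ≠ 0 := mul_ne_zero two_ne_zero hlam
  intro e2 Bp M N Bm
  show
    ⁅mulOp ((2 * lam)⁻¹ • divX (expSq (2 * lam) - 1)) * Dop, mulOp (PowerSeries.X ^ 2)⁆ =
        lam⁻¹ • (mulOp (expSq (2 * lam)) - 1) ∧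
    ⁅mulOp ((2 * lam)⁻¹ • divX (divX (expSq (2 * lam) - 1))) * (Dop * Dop) +
        mulOp (divX (expSq (2 * lam) +
          (2 * lam)⁻¹ • divX (divX (1 - expSq (2 * lam))))) * Dop,
      mulOp (PowerSeries.X ^ 2)⁆ =
        4 • (mulOp ((2 * lam)⁻¹ • divX (expSq (2 * lam) - 1)) * Dop) +
          2 • ((1 : Module.End ℂ (PowerSeries ℂ)) * mulOp (expSq (2 * lam))) ∧
    ⁅mulOp ((2 * lam)⁻¹ • divX (expSq (2 * lam) - 1)) * Dop,
      mulOp ((2 * lam)⁻¹ • divX (divX (expSq (2 * lam) - 1))) * (Dop * Dop) +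
        mulOp (divX (expSq (2 * lam) +
          (2 * lam)⁻¹ • divX (divX (1 - expSq (2 * lam))))) * Dop⁆ =
        -(2 • (mulOp ((2 * lam)⁻¹ • divX (divX (expSq (2 * lam) - 1))) * (Dop * Dop) +
            mulOp (divX (expSq (2 * lam) +
              (2 * lam)⁻¹ • divX (divX (1 - expSq (2 * lam))))) * Dop)) -
          (4 * lam) • ((mulOp ((2 * lam)⁻¹ • divX (expSq (2 * lam) - 1)) * Dop) *
            (mulOp ((2 * lam)⁻¹ • divX (expSq (2 * lam) - 1)) * Dop))
  clear_value e2 Bp M N Bm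
  clear e2 Bp M N Bm
  set e : PowerSeries ℂ := expSq (2 * lam) with he_def
  set Bv : PowerSeries ℂ := divX (e + (2 * lam)⁻¹ • divX (divX (1 - e))) with hBv_def
  set d : PowerSeries ℂ := divX (divX (e - 1)) with hd_def
  have hXne : (PowerSeries.X : PowerSeries ℂ) ≠ 0 := PowerSeries.X_ne_zero
  have d2z : PowerSeries.derivative ℂ (2 : PowerSeries ℂ) = 0 := by
    rw [show (2 : PowerSeries ℂ) = PowerSeries.C 2 from (map_ofNat _ 2).symm, derivative_C]
  have d4z : PowerSeries.derivative ℂ (4 : PowerSeries ℂ) = 0 := by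
    rw [show (4 : PowerSeries ℂ) = PowerSeries.C 4 from (map_ofNat _ 4).symm, derivative_C]
  -- constants
  have hCl0 : (PowerSeries.C lam) ≠ 0 := fun h => hlam (by
    simpa using congrArg (constantCoeff) h)
  have hI1 : PowerSeries.C lam⁻¹ * PowerSeries.C lam = 1 := by
    rw [← map_mul, inv_mul_cancel₀ hlam, map_one]
  have hC2 : PowerSeries.C (2 * lam) = 2 * PowerSeries.C lam := by
    rw [map_mul, map_ofNat]
  have hI2 : PowerSeries.C (2 * lam)⁻¹ * (2 * PowerSeries.C lam) = 1 := by
    rw [← hC2, ← map_mul, inv_mul_cancel₀ h2lam, map_one]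
  have hC4 : PowerSeries.C (4 * lam) = 4 * PowerSeries.C lam := by
    rw [map_mul, map_ofNat]
  -- basic series facts
  have he0 : constantCoeff (e - 1) = 0 := by
    simp [he_def, constantCoeff_expSq]
  have key1 : X * divX (e - 1) = e - 1 := X_mul_divX he0
  have hd0 : constantCoeff (divX (e - 1)) = 0 := by
    rw [← coeff_zero_eq_constantCoeff_apply, coeff_divX]
    simp [he_def, coeff_one_expSq, PowerSeries.coeff_one]
  have key2 : X * d = divX (e - 1) := by
    rw [hd_def]; exact X_mul_divX hd0
  have h1 : X * (X * d) = e - 1 := by rw [key2, key1]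
  have he' : PowerSeries.derivative ℂ e = 4 * PowerSeries.C lam * (X * e) := by
    rw [he_def, derivative_expSq]
    have : PowerSeries.C (2 * (2 * lam)) = 4 * PowerSeries.C lam := by
      rw [show 2 * (2 * lam) = 4 * lam by ring, hC4]
    rw [this]
  have h2 : 2 * (X * d) + X * (X * PowerSeries.derivative ℂ d)
      = 4 * PowerSeries.C lam * (X * e) := by
    have t := congrArg (⇑(PowerSeries.derivative ℂ)) h1
    simp only [Derivation.leibniz, smul_eq_mul, derivative_X, mul_one, map_sub,
      Derivation.map_one_eq_zero, he', d2z, d4z] at t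
    linear_combination t
  have h3 : 2 * d + 4 * (X * PowerSeries.derivative ℂ d) +
      X * (X * PowerSeries.derivative ℂ (PowerSeries.derivative ℂ d))
      = 4 * PowerSeries.C lam * e +
        16 * (PowerSeries.C lam)^2 * (X * (X * e)) := by
    have t := congrArg (⇑(PowerSeries.derivative ℂ)) h2
    simp only [Derivation.leibniz, smul_eq_mul, derivative_X, mul_one, map_add, map_sub,
      derivative_C, he', d2z, d4z] at t
    linear_combination t
  have hneg : divX (divX (1 - e)) = -d := by
    rw [show (1:PowerSeries ℂ) - e = -(e-1) by ring, divX_neg, divX_neg, hd_def]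
  have hBc : constantCoeff (e + (2 * lam)⁻¹ • divX (divX (1 - e))) = 0 := by
    rw [hneg, smul_eq_C_mul]
    have hde : constantCoeff d = 2 * lam := by
      rw [hd_def, ← coeff_zero_eq_constantCoeff_apply, coeff_divX, coeff_divX]
      simp [he_def, coeff_two_expSq, PowerSeries.coeff_one]
    simp only [map_add, map_mul, map_neg, hde, constantCoeff_C]
    rw [he_def, constantCoeff_expSq]
    field_simp
    ring
  have h4 : X * Bv = e - PowerSeries.C ((2 * lam)⁻¹) * d := by
    rw [hBv_def, X_mul_divX hBc, hneg, smul_eq_C_mul]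
    ring
  have h5 : Bv + X * PowerSeries.derivative ℂ Bv
      = 4 * PowerSeries.C lam * (X * e) -
        PowerSeries.C ((2 * lam)⁻¹) * PowerSeries.derivative ℂ d := by
    have t := congrArg (⇑(PowerSeries.derivative ℂ)) h4
    simp only [Derivation.leibniz, smul_eq_mul, derivative_X, mul_one, map_sub,
      derivative_C, he', d2z, d4z] at t
    linear_combination t
  refine ⟨?_, ?_, ?_⟩
  · refine LinearMap.ext fun p => ?_
    simp only [Ring.lie_def, LinearMap.sub_apply, LinearMap.add_apply, LinearMap.neg_apply,
      Module.End.mul_apply, LinearMap.smul_apply, Module.End.one_apply, mulOp_apply, Dop_apply]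
    simp only [← key2]
    simp only [smul_eq_C_mul, pow_two, hC4]
    simp only [map_add, Derivation.leibniz, smul_eq_mul, derivative_X, mul_one, derivative_C,
      map_zero, mul_zero, zero_mul, add_zero, zero_add]
    refine mul_left_cancel₀ (M₀ := PowerSeries ℂ) hCl0 ?_
    linear_combination (2 * PowerSeries.C ((2*lam)⁻¹) * p * PowerSeries.C lam) * h1 +
      (e * p - p) * hI2 + (p - e * p) * hI1
  · refine LinearMap.ext fun p => ?_
    simp only [Ring.lie_def, LinearMap.sub_apply, LinearMap.add_apply, LinearMap.neg_apply,
      Module.End.mul_apply, LinearMap.smul_apply, Module.End.one_apply, mulOp_apply, Dop_apply]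
    simp only [← key2]
    simp only [smul_eq_C_mul, pow_two, hC4]
    simp only [map_add, Derivation.leibniz, smul_eq_mul, derivative_X, mul_one, derivative_C,
      map_zero, mul_zero, zero_mul, add_zero, zero_add]
    refine mul_left_cancel₀ (M₀ := PowerSeries ℂ) (mul_ne_zero hCl0 (mul_ne_zero hXne hXne)) ?_
    linear_combination (2 * p * X * X * PowerSeries.C lam) * h4
  · refine LinearMap.ext fun p => ?_
    simp only [Ring.lie_def, LinearMap.sub_apply, LinearMap.add_apply, LinearMap.neg_apply,
      Module.End.mul_apply, LinearMap.smul_apply, Module.End.one_apply, mulOp_apply, Dop_apply]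
    simp only [← key2]
    simp only [smul_eq_C_mul, pow_two, hC4]
    simp only [map_add, Derivation.leibniz, smul_eq_mul, derivative_X, mul_one, derivative_C,
      map_zero, mul_zero, zero_mul, add_zero, zero_add]
    refine mul_left_cancel₀ (M₀ := PowerSeries ℂ) (mul_ne_zero hCl0 (mul_ne_zero hXne hXne)) ?_
    set cI : PowerSeries ℂ := PowerSeries.C ((2*lam)⁻¹) with hcI
    set cL : PowerSeries ℂ := PowerSeries.C lam with hcL
    set p1 : PowerSeries ℂ := PowerSeries.derivative ℂ p with hp1
    set p2 : PowerSeries ℂ := PowerSeries.derivative ℂ p1 with hp2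
    linear_combination
      (-(cI^2) * d * p1 * X * cL) * h3 +
      (cI * d * p1 * X * X * cL) * h5 +
      (-(cI * Bv * p1 * X * cL) + cI^2 * d * p1 * cL + 4 * cI^2 * d * p1 * X * X * cL^2
        - cI^2 * d * p2 * X * cL) * h2 +
      (2 * p1 * X * cL - 4 * cI * e * p1 * X * cL^2) * h4 +
      (2 * cI * p2 * cL + 4 * cI * e * p1 * X * cL^2 - 4 * cI^2 * p2 * cL^2
        - 4 * cI^2 * d * p1 * X * cL^2 + 4 * cI^2 * d * p2 * X * X * cL^2) * h1 +
      (-(2 * e * p1 * X * cL) + 2 * cI * p2 * cL - 2 * cI * e * p2 * cL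
        + 2 * cI * d * p1 * X * cL) * hI2


end
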